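/- Let U ⊆ ℝ² be a nonempty open connected set. Let β, β' : U → ℝ be positive C¹ functions and let γ̃, γ̃' : U → M₂(ℝ) be C¹ maps whose values are symmetric positive-definite matrices of determinant 1; set γ = βγ̃ and γ' = β'γ̃'. Let u₁, u₂, u₃, u₄ and u'₁, u'₂, u'₃, u'₄ be real-valued C² functions on U, and set H_i := γ∇u_i and H'_i := γ'∇u'_i for i = 1,…,4. Assume: (i) H_i = H'_i on U for i = 1,…,4; (ii) det([H₁(x), H₂(x)]) ≠ 0 for every x ∈ U; (iii) defining on U the functions μ₁ := det([H₃,H₂])/det([H₁,H₂]), μ₂ := det([H₁,H₃])/det([H₁,H₂]), λ₁ := det([H₄,H₂])/det([H₁,H₂]), λ₂ := det([H₁,H₄])/det([H₁,H₂]), the matrices Z₁ := [∇μ₁, ∇μ₂], Z₂ := [∇λ₁, ∇λ₂], and M_k := (Z_k [H₁,H₂]ᵀ J)^sym for k = 1,2, the symmetric matrices M₁(x) and M₂(x) are linearly independent for every x ∈ U; (iv) β(x₀) = β'(x₀) for some x₀ ∈ U. Then γ̃ = γ̃' and β = β' on U, so γ = γ' on U. -/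

import Mathlib

open Matrix

/-- The gradient of a real-valued function on ℝ², as a vector of partial derivatives. -/
noncomputable def grad (u : (Fin 2 → ℝ) → ℝ) (x : Fin 2 → ℝ) : Fin 2 → ℝ :=
  fun i => fderiv ℝ u x (Pi.single i 1)

/-- The 2×2 matrix with columns `a` and `b`. -/
def col2 (a b : Fin 2 → ℝ) : Matrix (Fin 2) (Fin 2) ℝ :=
  Matrix.of fun i => ![a i, b i]

/-- The rotation matrix `J = e₂⊗e₁ − e₁⊗e₂`, i.e. `Jv = (−v₂, v₁)`. -/
def J2 : Matrix (Fin 2) (Fin 2) ℝ := !![0, -1; 1, 0]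

/-- The symmetric part `(A + Aᵀ)/2` of a matrix. -/
noncomputable def symPart (A : Matrix (Fin 2) (Fin 2) ℝ) : Matrix (Fin 2) (Fin 2) ℝ :=
  (2 : ℝ)⁻¹ • (A + Aᵀ)

/-- The constraint matrix `M = (Z[H₁,H₂]ᵀJ)^sym` at `x`, built from current densities
`H₁, H₂` and two further ones `Ha, Hb` via the Cramer's rule coefficients
`μ₁ = det(Ha,H₂)/det(H₁,H₂)`, `μ₂ = det(H₁,Ha)/det(H₁,H₂)` (with `Ha = H₃` or `H₄`)
and `Z = [∇μ₁, ∇μ₂]`. -/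
noncomputable def constraintMat (H₁ H₂ Ha : (Fin 2 → ℝ) → Fin 2 → ℝ) (x : Fin 2 → ℝ) :
    Matrix (Fin 2) (Fin 2) ℝ :=
  symPart
    (col2
      (grad (fun y => (col2 (Ha y) (H₂ y)).det / (col2 (H₁ y) (H₂ y)).det) x)
      (grad (fun y => (col2 (H₁ y) (Ha y)).det / (col2 (H₁ y) (H₂ y)).det) x)
      * (col2 (H₁ x) (H₂ x))ᵀ * J2)

/-- Uniqueness content of Theorem 2.1: on a nonempty open connected set `U ⊆ ℝ²`, four
internal current densities `Hᵢ = γ∇uᵢ` satisfying the nondegeneracy condition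
`det(H₁,H₂) ≠ 0` and the linear independence of the constraint matrices `M₁, M₂` determine
an anisotropic conductivity `γ = βγ̃` (with `γ̃` symmetric positive definite of determinant 1)
up to the value of `β` at one point: if two such conductivities produce the same data and the
scalar parts agree at one point `x₀ ∈ U`, then they coincide on `U`. -/
lemma col2_det (a b : Fin 2 → ℝ) : (col2 a b).det = a 0 * b 1 - a 1 * b 0 := by
  simp [col2, Matrix.det_fin_two]; ring

lemma smul_mulVec_apply (r : ℝ) (A : Matrix (Fin 2) (Fin 2) ℝ) (v : Fin 2 → ℝ) (j : Fin 2) :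
    ((r • A).mulVec v) j = r * A j 0 * v 0 + r * A j 1 * v 1 := by
  show (fun k => (r • A) j k) ⬝ᵥ v = _
  simp only [dotProduct, Fin.sum_univ_two, Matrix.smul_apply, smul_eq_mul, mul_assoc]

lemma fderiv_apply_comm {F : (Fin 2 → ℝ) → ((Fin 2 → ℝ) →L[ℝ] ℝ)} {x v w : Fin 2 → ℝ}
    (hF : DifferentiableAt ℝ F x) :
    fderiv ℝ (fun y => F y v) x w = fderiv ℝ F x w v := by
  have h := ((ContinuousLinearMap.apply ℝ ℝ v).hasFDerivAt.comp x hF.hasFDerivAt).fderiv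
  have : fderiv ℝ (fun y => F y v) x = ((ContinuousLinearMap.apply ℝ ℝ v).comp (fderiv ℝ F x)) := h
  rw [this]; rfl

lemma gradDiff {U : Set (Fin 2 → ℝ)} (hU : IsOpen U) {x : Fin 2 → ℝ} (hx : x ∈ U)
    {u : (Fin 2 → ℝ) → ℝ} (hu : ContDiffOn ℝ 2 u U) (j : Fin 2) :
    DifferentiableAt ℝ (fun y => grad u y j) x := by
  have hF : DifferentiableAt ℝ (fderiv ℝ u) x :=
    (((hu.contDiffAt (hU.mem_nhds hx)).fderiv_right (m := 1) (by norm_num)).differentiableAt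
      (by norm_num))
  exact ((ContinuousLinearMap.apply ℝ ℝ (Pi.single j 1)).differentiable.differentiableAt).comp x hF

lemma symm2 {U : Set (Fin 2 → ℝ)} (hU : IsOpen U) {x : Fin 2 → ℝ} (hx : x ∈ U)
    {u : (Fin 2 → ℝ) → ℝ} (hu : ContDiffOn ℝ 2 u U) (i j : Fin 2) :
    fderiv ℝ (fun y => grad u y i) x (Pi.single j 1)
      = fderiv ℝ (fun y => grad u y j) x (Pi.single i 1) := by
  have hat : ContDiffAt ℝ 2 u x := hu.contDiffAt (hU.mem_nhds hx)
  have hF : DifferentiableAt ℝ (fderiv ℝ u) x :=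
    ((hat.fderiv_right (m := 1) (by norm_num)).differentiableAt (by norm_num))
  have hs := hat.isSymmSndFDerivAt (by norm_num)
  have h1 : fderiv ℝ (fun y => grad u y i) x (Pi.single j 1)
      = fderiv ℝ (fderiv ℝ u) x (Pi.single j 1) (Pi.single i 1) := fderiv_apply_comm hF
  have h2 : fderiv ℝ (fun y => grad u y j) x (Pi.single i 1)
      = fderiv ℝ (fderiv ℝ u) x (Pi.single i 1) (Pi.single j 1) := fderiv_apply_comm hF
  rw [h1, h2, hs]

lemma curl_mul {U : Set (Fin 2 → ℝ)} (hU : IsOpen U) {x : Fin 2 → ℝ} (hx : x ∈ U)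
    {u c : (Fin 2 → ℝ) → ℝ} (hu : ContDiffOn ℝ 2 u U) (hc : DifferentiableAt ℝ c x) :
    fderiv ℝ (fun y => c y * grad u y 1) x (Pi.single 0 1)
      - fderiv ℝ (fun y => c y * grad u y 0) x (Pi.single 1 1)
    = fderiv ℝ c x (Pi.single 0 1) * grad u x 1
      - fderiv ℝ c x (Pi.single 1 1) * grad u x 0 := by
  rw [fderiv_fun_mul hc (gradDiff hU hx hu 1), fderiv_fun_mul hc (gradDiff hU hx hu 0)]
  simp only [ContinuousLinearMap.add_apply, ContinuousLinearMap.smul_apply, smul_eq_mul]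
  have hs := symm2 hU hx hu 1 0
  ring_nf
  ring_nf at hs
  rw [hs]
  ring

lemma exists_c {w1 w2 w3 a1 a2 a3 : ℝ} (hw : ¬(w1 = 0 ∧ w2 = 0 ∧ w3 = 0))
    (h1 : a2 * w3 = a3 * w2) (h2 : a3 * w1 = a1 * w3) (h3 : a1 * w2 = a2 * w1) :
    ∃ c, a1 = c * w1 ∧ a2 = c * w2 ∧ a3 = c * w3 := by
  by_cases hw1 : w1 = 0
  · by_cases hw2 : w2 = 0
    · have hw3 : w3 ≠ 0 := fun h => hw ⟨hw1, hw2, h⟩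
      refine ⟨a3 / w3, ?_, ?_, (div_mul_cancel₀ _ hw3).symm⟩ <;>
        rw [div_mul_eq_mul_div, eq_div_iff hw3] <;>
        [linear_combination -h2; linear_combination h1]
    · refine ⟨a2 / w2, ?_, (div_mul_cancel₀ _ hw2).symm, ?_⟩ <;>
        rw [div_mul_eq_mul_div, eq_div_iff hw2] <;>
        [linear_combination h3; linear_combination -h1]
  · refine ⟨a1 / w1, (div_mul_cancel₀ _ hw1).symm, ?_, ?_⟩ <;>
      rw [div_mul_eq_mul_div, eq_div_iff hw1] <;>
      [linear_combination -h3; linear_combination h2]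

lemma pointwise_lin (g g' M N : Matrix (Fin 2) (Fin 2) ℝ)
    (hgs : g 1 0 = g 0 1) (hg's : g' 1 0 = g' 0 1)
    (hMs : M 1 0 = M 0 1) (hNs : N 1 0 = N 0 1)
    (hgpos : 0 < g 0 0) (hg'pos : 0 < g' 0 0)
    (hgdet : g 0 0 * g 1 1 - g 0 1 * g 0 1 = 1)
    (hg'det : g' 0 0 * g' 1 1 - g' 0 1 * g' 0 1 = 1)
    (hind : LinearIndependent ℝ ![M, N])
    (o1 : g 0 0 * M 0 0 + g 0 1 * M 0 1 + g 1 0 * M 1 0 + g 1 1 * M 1 1 = 0)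
    (o2 : g 0 0 * N 0 0 + g 0 1 * N 0 1 + g 1 0 * N 1 0 + g 1 1 * N 1 1 = 0)
    (o3 : g' 0 0 * M 0 0 + g' 0 1 * M 0 1 + g' 1 0 * M 1 0 + g' 1 1 * M 1 1 = 0)
    (o4 : g' 0 0 * N 0 0 + g' 0 1 * N 0 1 + g' 1 0 * N 1 0 + g' 1 1 * N 1 1 = 0) :
    g = g' := by
  rw [hgs, hMs] at o1
  rw [hgs, hNs] at o2
  rw [hg's, hMs] at o3
  rw [hg's, hNs] at o4
  have dep : ∀ s t : ℝ, s • M + t • N = 0 → s = 0 ∧ t = 0 := by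
    intro s t h
    have hli := Fintype.linearIndependent_iff.mp hind ![s, t] (by
      simpa [Fin.sum_univ_two] using h)
    exact ⟨hli 0, hli 1⟩
  have hw : ¬(M 0 1 * N 1 1 - M 1 1 * N 0 1 = 0 ∧ M 1 1 * N 0 0 - M 0 0 * N 1 1 = 0
      ∧ M 0 0 * N 0 1 - M 0 1 * N 0 0 = 0) := by
    rintro ⟨e1, e2, e3⟩
    by_cases hma : M 0 0 = 0 ∧ M 0 1 = 0 ∧ M 1 1 = 0
    · obtain ⟨q1, q2, q3⟩ := hma
      have hM0 : M = 0 := by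
        ext i j
        fin_cases i <;> fin_cases j <;>
          simp only [Fin.zero_eta, Fin.mk_one, Matrix.zero_apply]
        · exact q1
        · exact q2
        · rw [hMs]; exact q2
        · exact q3
      have := (dep 1 0 (by rw [hM0]; simp)).1
      norm_num at this
    · have key : ∃ s t : ℝ, t ≠ 0 ∧ s • M + t • N = 0 := by
        by_cases h1' : M 0 0 ≠ 0
        · refine ⟨N 0 0, -(M 0 0), by simpa using h1', ?_⟩
          ext i j
          fin_cases i <;> fin_cases j <;>
            simp only [Fin.zero_eta, Fin.mk_one, Matrix.add_apply, Matrix.smul_apply,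
              smul_eq_mul, Matrix.zero_apply]
          · ring
          · linear_combination -e3
          · linear_combination -e3 + N 0 0 * hMs - M 0 0 * hNs
          · linear_combination e2
        · by_cases h2' : M 0 1 ≠ 0
          · refine ⟨N 0 1, -(M 0 1), by simpa using h2', ?_⟩
            ext i j
            fin_cases i <;> fin_cases j <;>
              simp only [Fin.zero_eta, Fin.mk_one, Matrix.add_apply, Matrix.smul_apply,
                smul_eq_mul, Matrix.zero_apply]
            · linear_combination e3
            · ring
            · linear_combination N 0 1 * hMs - M 0 1 * hNs
            · linear_combination -e1
          · have h3' : M 1 1 ≠ 0 := by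
              push_neg at h1' h2'
              exact fun h => hma ⟨h1', h2', h⟩
            refine ⟨N 1 1, -(M 1 1), by simpa using h3', ?_⟩
            ext i j
            fin_cases i <;> fin_cases j <;>
              simp only [Fin.zero_eta, Fin.mk_one, Matrix.add_apply, Matrix.smul_apply,
                smul_eq_mul, Matrix.zero_apply]
            · linear_combination -e2
            · linear_combination e1
            · linear_combination e1 + N 1 1 * hMs - M 1 1 * hNs
            · ring
      obtain ⟨s, t, ht, hst⟩ := key
      exact ht (dep s t hst).2
  obtain ⟨c, hc1, hc2, hc3⟩ :=
    exists_c (a1 := g 0 0) (a2 := 2 * g 0 1) (a3 := g 1 1) hw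
      (by linear_combination M 0 0 * o2 - N 0 0 * o1)
      (by linear_combination M 0 1 * o2 - N 0 1 * o1)
      (by linear_combination M 1 1 * o2 - N 1 1 * o1)
  obtain ⟨c', hd1, hd2, hd3⟩ :=
    exists_c (a1 := g' 0 0) (a2 := 2 * g' 0 1) (a3 := g' 1 1) hw
      (by linear_combination M 0 0 * o4 - N 0 0 * o3)
      (by linear_combination M 0 1 * o4 - N 0 1 * o3)
      (by linear_combination M 1 1 * o4 - N 1 1 * o3)
  have hg01 : g 0 1 = c * (M 1 1 * N 0 0 - M 0 0 * N 1 1) / 2 := by linarith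
  have hg'01 : g' 0 1 = c' * (M 1 1 * N 0 0 - M 0 0 * N 1 1) / 2 := by linarith
  rw [hc1, hg01, hc3] at hgdet
  rw [hd1, hg'01, hd3] at hg'det
  have hKne : (M 0 1 * N 1 1 - M 1 1 * N 0 1) * (M 0 0 * N 0 1 - M 0 1 * N 0 0)
      - (M 1 1 * N 0 0 - M 0 0 * N 1 1) * (M 1 1 * N 0 0 - M 0 0 * N 1 1) / 4 ≠ 0 := by
    intro h
    have hz : (1 : ℝ) = 0 := by linear_combination -hgdet + c * c * h
    norm_num at hz
  have hsq : (c' - c) * (c' + c) = 0 := by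
    have h4 : (c' * c' - c * c) * ((M 0 1 * N 1 1 - M 1 1 * N 0 1) * (M 0 0 * N 0 1 - M 0 1 * N 0 0)
        - (M 1 1 * N 0 0 - M 0 0 * N 1 1) * (M 1 1 * N 0 0 - M 0 0 * N 1 1) / 4) = 0 := by
      linear_combination hg'det - hgdet
    have h5 := (mul_eq_zero.mp h4).resolve_right hKne
    linear_combination h5
  have hceq : c' = c := by
    rcases mul_eq_zero.mp hsq with h | h
    · exact sub_eq_zero.mp h
    · exfalso
      have hc'neg : c' = -c := by linarith
      have h5 : g' 0 0 = -(g 0 0) := by rw [hd1, hc1, hc'neg]; ring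
      linarith
  have e00 : g 0 0 = g' 0 0 := by rw [hc1, hd1, hceq]
  have e01 : g 0 1 = g' 0 1 := by rw [hg01, hg'01, hceq]
  have e11 : g 1 1 = g' 1 1 := by rw [hc3, hd3, hceq]
  ext i j
  fin_cases i <;> fin_cases j <;> simp only [Fin.zero_eta, Fin.mk_one]
  · exact e00
  · exact e01
  · rw [hgs, hg's]; exact e01
  · exact e11


lemma symPart_sym (A : Matrix (Fin 2) (Fin 2) ℝ) : symPart A 1 0 = symPart A 0 1 := by
  simp only [symPart, Matrix.smul_apply, Matrix.add_apply, Matrix.transpose_apply, smul_eq_mul]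
  ring

lemma ortho {U : Set (Fin 2 → ℝ)} (hUopen : IsOpen U)
    {β : (Fin 2 → ℝ) → ℝ} (hβC : ContDiffOn ℝ 1 β U) (hβpos : ∀ x ∈ U, 0 < β x)
    {γt : (Fin 2 → ℝ) → Matrix (Fin 2) (Fin 2) ℝ}
    (hγtC : ∀ i j, ContDiffOn ℝ 1 (fun x => γt x i j) U)
    (hγsym : ∀ x ∈ U, γt x 1 0 = γt x 0 1)
    (hγdet : ∀ x ∈ U, (γt x).det = 1)
    {u₁ u₂ ua : (Fin 2 → ℝ) → ℝ}
    (hu₁ : ContDiffOn ℝ 2 u₁ U) (hu₂ : ContDiffOn ℝ 2 u₂ U) (hua : ContDiffOn ℝ 2 ua U)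
    {H₁ H₂ Ha : (Fin 2 → ℝ) → Fin 2 → ℝ}
    (hH₁ : ∀ x ∈ U, H₁ x = (β x • γt x).mulVec (grad u₁ x))
    (hH₂ : ∀ x ∈ U, H₂ x = (β x • γt x).mulVec (grad u₂ x))
    (hHa : ∀ x ∈ U, Ha x = (β x • γt x).mulVec (grad ua x))
    (hdet : ∀ x ∈ U, (col2 (H₁ x) (H₂ x)).det ≠ 0)
    {x : Fin 2 → ℝ} (hx : x ∈ U) :
    γt x 0 0 * constraintMat H₁ H₂ Ha x 0 0 + γt x 0 1 * constraintMat H₁ H₂ Ha x 0 1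
      + γt x 1 0 * constraintMat H₁ H₂ Ha x 1 0 + γt x 1 1 * constraintMat H₁ H₂ Ha x 1 1
      = 0 := by
  have hUn : U ∈ nhds x := hUopen.mem_nhds hx
  set μ₁ : (Fin 2 → ℝ) → ℝ :=
    fun y => (col2 (Ha y) (H₂ y)).det / (col2 (H₁ y) (H₂ y)).det with hμ₁def
  set μ₂ : (Fin 2 → ℝ) → ℝ :=
    fun y => (col2 (H₁ y) (Ha y)).det / (col2 (H₁ y) (H₂ y)).det with hμ₂def
  have hβd : DifferentiableAt ℝ β x := (hβC.contDiffAt hUn).differentiableAt one_ne_zero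
  have hgd : ∀ i j, DifferentiableAt ℝ (fun y => γt y i j) x := fun i j =>
    ((hγtC i j).contDiffAt hUn).differentiableAt one_ne_zero
  -- differentiability of the K components
  have hKd : ∀ (u : (Fin 2 → ℝ) → ℝ), ContDiffOn ℝ 2 u U → ∀ j : Fin 2,
      DifferentiableAt ℝ (fun y => ((β y • γt y).mulVec (grad u y)) j) x := by
    intro u hu j
    have heq : (fun y => ((β y • γt y).mulVec (grad u y)) j)
        = fun y => β y * γt y j 0 * grad u y 0 + β y * γt y j 1 * grad u y 1 :=
      funext fun y => smul_mulVec_apply _ _ _ _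
    rw [heq]
    exact ((hβd.mul (hgd j 0)).mul (gradDiff hUopen hx hu 0)).add
      ((hβd.mul (hgd j 1)).mul (gradDiff hUopen hx hu 1))
  -- nonzero denominator in K form
  have hdenx : (col2 ((β x • γt x).mulVec (grad u₁ x)) ((β x • γt x).mulVec (grad u₂ x))).det
      ≠ 0 := by
    rw [← hH₁ x hx, ← hH₂ x hx]; exact hdet x hx
  have hdenx' : ((β x • γt x).mulVec (grad u₁ x)) 0 * ((β x • γt x).mulVec (grad u₂ x)) 1
      - ((β x • γt x).mulVec (grad u₁ x)) 1 * ((β x • γt x).mulVec (grad u₂ x)) 0 ≠ 0 := by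
    rw [← col2_det]; exact hdenx
  have hden'' : DifferentiableAt ℝ
      (fun y => ((β y • γt y).mulVec (grad u₁ y)) 0 * ((β y • γt y).mulVec (grad u₂ y)) 1
        - ((β y • γt y).mulVec (grad u₁ y)) 1 * ((β y • γt y).mulVec (grad u₂ y)) 0) x :=
    ((hKd u₁ hu₁ 0).mul (hKd u₂ hu₂ 1)).sub ((hKd u₁ hu₁ 1).mul (hKd u₂ hu₂ 0))
  have hμ₁d : DifferentiableAt ℝ μ₁ x := by
    have heq : μ₁ =ᶠ[nhds x] (fun y =>
        (((β y • γt y).mulVec (grad ua y)) 0 * ((β y • γt y).mulVec (grad u₂ y)) 1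
          - ((β y • γt y).mulVec (grad ua y)) 1 * ((β y • γt y).mulVec (grad u₂ y)) 0) *
        (((β y • γt y).mulVec (grad u₁ y)) 0 * ((β y • γt y).mulVec (grad u₂ y)) 1
          - ((β y • γt y).mulVec (grad u₁ y)) 1 * ((β y • γt y).mulVec (grad u₂ y)) 0)⁻¹) := by
      refine Filter.eventuallyEq_of_mem hUn (fun y hy => ?_)
      simp only [hμ₁def]
      rw [hH₁ y hy, hH₂ y hy, hHa y hy, col2_det, col2_det, div_eq_mul_inv]
    refine heq.differentiableAt_iff.mpr ?_
    exact (((hKd ua hua 0).mul (hKd u₂ hu₂ 1)).sub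
      ((hKd ua hua 1).mul (hKd u₂ hu₂ 0))).mul (hden''.inv hdenx')
  have hμ₂d : DifferentiableAt ℝ μ₂ x := by
    have heq : μ₂ =ᶠ[nhds x] (fun y =>
        (((β y • γt y).mulVec (grad u₁ y)) 0 * ((β y • γt y).mulVec (grad ua y)) 1
          - ((β y • γt y).mulVec (grad u₁ y)) 1 * ((β y • γt y).mulVec (grad ua y)) 0) *
        (((β y • γt y).mulVec (grad u₁ y)) 0 * ((β y • γt y).mulVec (grad u₂ y)) 1
          - ((β y • γt y).mulVec (grad u₁ y)) 1 * ((β y • γt y).mulVec (grad u₂ y)) 0)⁻¹) := by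
      refine Filter.eventuallyEq_of_mem hUn (fun y hy => ?_)
      simp only [hμ₂def]
      rw [hH₁ y hy, hH₂ y hy, hHa y hy, col2_det, col2_det, div_eq_mul_inv]
    refine heq.differentiableAt_iff.mpr ?_
    exact (((hKd u₁ hu₁ 0).mul (hKd ua hua 1)).sub
      ((hKd u₁ hu₁ 1).mul (hKd ua hua 0))).mul (hden''.inv hdenx')
  -- the Cramer decomposition on U
  have hcomb : ∀ y ∈ U, ∀ j : Fin 2,
      grad ua y j = μ₁ y * grad u₁ y j + μ₂ y * grad u₂ y j := by
    intro y hy j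
    have hde := hdet y hy
    simp only [hμ₁def, hμ₂def]
    rw [hH₁ y hy, hH₂ y hy, hHa y hy]
    rw [hH₁ y hy, hH₂ y hy] at hde
    simp only [col2_det, smul_mulVec_apply] at hde ⊢
    have hdg := hγdet y hy
    rw [Matrix.det_fin_two] at hdg
    fin_cases j <;> simp only [Fin.zero_eta, Fin.mk_one] <;>
      rw [div_mul_eq_mul_div, div_mul_eq_mul_div, ← add_div, eq_div_iff hde] <;> ring
  -- the curl relation
  have hstar : fderiv ℝ μ₁ x (Pi.single 0 1) * grad u₁ x 1
      - fderiv ℝ μ₁ x (Pi.single 1 1) * grad u₁ x 0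
      + (fderiv ℝ μ₂ x (Pi.single 0 1) * grad u₂ x 1
      - fderiv ℝ μ₂ x (Pi.single 1 1) * grad u₂ x 0) = 0 := by
    have h0 : fderiv ℝ (fun y => grad ua y 1) x (Pi.single 0 1)
        - fderiv ℝ (fun y => grad ua y 0) x (Pi.single 1 1) = 0 := by
      rw [symm2 hUopen hx hua 1 0]; ring
    have he1 : (fun y => grad ua y 1) =ᶠ[nhds x]
        (fun y => μ₁ y * grad u₁ y 1 + μ₂ y * grad u₂ y 1) :=
      Filter.eventuallyEq_of_mem hUn (fun y hy => hcomb y hy 1)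
    have he0 : (fun y => grad ua y 0) =ᶠ[nhds x]
        (fun y => μ₁ y * grad u₁ y 0 + μ₂ y * grad u₂ y 0) :=
      Filter.eventuallyEq_of_mem hUn (fun y hy => hcomb y hy 0)
    rw [he1.fderiv_eq, he0.fderiv_eq] at h0
    rw [fderiv_fun_add (f := fun y => μ₁ y * grad u₁ y 1) (g := fun y => μ₂ y * grad u₂ y 1)
        (hμ₁d.mul (gradDiff hUopen hx hu₁ 1)) (hμ₂d.mul (gradDiff hUopen hx hu₂ 1)),
      fderiv_fun_add (f := fun y => μ₁ y * grad u₁ y 0) (g := fun y => μ₂ y * grad u₂ y 0)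
        (hμ₁d.mul (gradDiff hUopen hx hu₁ 0)) (hμ₂d.mul (gradDiff hUopen hx hu₂ 0))]
      at h0
    simp only [ContinuousLinearMap.add_apply] at h0
    have k1 := curl_mul hUopen hx hu₁ hμ₁d
    have k2 := curl_mul hUopen hx hu₂ hμ₂d
    linear_combination h0 - k1 - k2
  -- final algebraic computation
  have hsymg := hγsym x hx
  have hMdef : constraintMat H₁ H₂ Ha x
      = symPart (col2 (grad μ₁ x) (grad μ₂ x) * (col2 (H₁ x) (H₂ x))ᵀ * J2) := rfl
  rw [hMdef]
  set p := grad μ₁ x with hp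
  set q := grad μ₂ x with hq
  have hp0 : fderiv ℝ μ₁ x (Pi.single 0 1) = p 0 := rfl
  have hp1 : fderiv ℝ μ₁ x (Pi.single 1 1) = p 1 := rfl
  have hq0 : fderiv ℝ μ₂ x (Pi.single 0 1) = q 0 := rfl
  have hq1 : fderiv ℝ μ₂ x (Pi.single 1 1) = q 1 := rfl
  rw [hp0, hp1, hq0, hq1] at hstar
  rw [hH₁ x hx, hH₂ x hx]
  simp only [symPart, J2, col2, Matrix.smul_apply, Matrix.add_apply, Matrix.transpose_apply,
    Matrix.mul_apply, Fin.sum_univ_two, Matrix.of_apply, Matrix.cons_val', Matrix.cons_val_zero,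
    Matrix.cons_val_one, Matrix.head_cons, Matrix.head_fin_const, Matrix.empty_val',
    Matrix.cons_val_fin_one, smul_eq_mul, smul_mulVec_apply]
  rw [hsymg]
  linear_combination (β x * (γt x 0 0 * γt x 1 1 - γt x 0 1 * γt x 0 1)) * hstar

lemma beta_eq {U : Set (Fin 2 → ℝ)} (hUopen : IsOpen U) (hUconn : IsConnected U)
    {β β' : (Fin 2 → ℝ) → ℝ} (hβC : ContDiffOn ℝ 1 β U) (hβ'C : ContDiffOn ℝ 1 β' U)
    (hβ'pos : ∀ x ∈ U, 0 < β' x)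
    {γt : (Fin 2 → ℝ) → Matrix (Fin 2) (Fin 2) ℝ}
    (hγdet : ∀ x ∈ U, (γt x).det = 1)
    {u₁ u₂ v₁ v₂ : (Fin 2 → ℝ) → ℝ}
    (hu₁ : ContDiffOn ℝ 2 u₁ U) (hu₂ : ContDiffOn ℝ 2 u₂ U)
    (hv₁ : ContDiffOn ℝ 2 v₁ U) (hv₂ : ContDiffOn ℝ 2 v₂ U)
    {H₁ H₂ : (Fin 2 → ℝ) → Fin 2 → ℝ}
    (hH₁ : ∀ x ∈ U, H₁ x = (β x • γt x).mulVec (grad u₁ x))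
    (hH₂ : ∀ x ∈ U, H₂ x = (β x • γt x).mulVec (grad u₂ x))
    (hH₁' : ∀ x ∈ U, H₁ x = (β' x • γt x).mulVec (grad v₁ x))
    (hH₂' : ∀ x ∈ U, H₂ x = (β' x • γt x).mulVec (grad v₂ x))
    (hdet : ∀ x ∈ U, (col2 (H₁ x) (H₂ x)).det ≠ 0)
    {x₀ : Fin 2 → ℝ} (hx₀ : x₀ ∈ U) (hβx₀ : β x₀ = β' x₀) :
    ∀ x ∈ U, β x = β' x := by
  set h : (Fin 2 → ℝ) → ℝ := fun y => β y / β' y with hh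
  have hβ'ne : ∀ y ∈ U, β' y ≠ 0 := fun y hy => (hβ'pos y hy).ne'
  have hhd : ∀ y ∈ U, DifferentiableAt ℝ h y := by
    intro y hy
    have hb := (hβC.contDiffAt (hUopen.mem_nhds hy)).differentiableAt one_ne_zero
    have hb' := (hβ'C.contDiffAt (hUopen.mem_nhds hy)).differentiableAt one_ne_zero
    simp only [hh, div_eq_mul_inv]
    exact hb.mul (hb'.inv (hβ'ne y hy))
  have hcomb : ∀ (u v : (Fin 2 → ℝ) → ℝ) (H : (Fin 2 → ℝ) → Fin 2 → ℝ),
      (∀ z ∈ U, H z = (β z • γt z).mulVec (grad u z)) →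
      (∀ z ∈ U, H z = (β' z • γt z).mulVec (grad v z)) →
      ∀ y ∈ U, ∀ j : Fin 2, grad v y j = h y * grad u y j := by
    intro u v H hHu hHv y hy j
    have he : (β y • γt y).mulVec (grad u y) = (β' y • γt y).mulVec (grad v y) := by
      rw [← hHu y hy, ← hHv y hy]
    have e0 := congrFun he 0
    have e1 := congrFun he 1
    simp only [smul_mulVec_apply] at e0 e1
    have hdg := hγdet y hy
    rw [Matrix.det_fin_two] at hdg
    have hz0 : β' y * grad v y 0 - β y * grad u y 0 = 0 := by
      linear_combination (-(γt y 1 1)) * e0 + γt y 0 1 * e1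
        - (β' y * grad v y 0 - β y * grad u y 0) * hdg
    have hz1 : β' y * grad v y 1 - β y * grad u y 1 = 0 := by
      linear_combination γt y 1 0 * e0 - γt y 0 0 * e1
        - (β' y * grad v y 1 - β y * grad u y 1) * hdg
    have hb'ne := hβ'ne y hy
    fin_cases j <;> simp only [Fin.zero_eta, Fin.mk_one, hh] <;>
      rw [div_mul_eq_mul_div, eq_div_iff hb'ne]
    · linear_combination hz0
    · linear_combination hz1
  have hd0 : ∀ x ∈ U, fderiv ℝ h x = 0 := by
    intro x hx
    have hE : ∀ (u v : (Fin 2 → ℝ) → ℝ) (H : (Fin 2 → ℝ) → Fin 2 → ℝ),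
        ContDiffOn ℝ 2 u U → ContDiffOn ℝ 2 v U →
        (∀ z ∈ U, H z = (β z • γt z).mulVec (grad u z)) →
        (∀ z ∈ U, H z = (β' z • γt z).mulVec (grad v z)) →
        fderiv ℝ h x (Pi.single 0 1) * grad u x 1
          - fderiv ℝ h x (Pi.single 1 1) * grad u x 0 = 0 := by
      intro u v H hu hv hHu hHv
      have h0 : fderiv ℝ (fun y => grad v y 1) x (Pi.single 0 1)
          - fderiv ℝ (fun y => grad v y 0) x (Pi.single 1 1) = 0 := by
        rw [symm2 hUopen hx hv 1 0]; ring
      have he1 : (fun y => grad v y 1) =ᶠ[nhds x] (fun y => h y * grad u y 1) :=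
        Filter.eventuallyEq_of_mem (hUopen.mem_nhds hx)
          (fun y hy => hcomb u v H hHu hHv y hy 1)
      have he0 : (fun y => grad v y 0) =ᶠ[nhds x] (fun y => h y * grad u y 0) :=
        Filter.eventuallyEq_of_mem (hUopen.mem_nhds hx)
          (fun y hy => hcomb u v H hHu hHv y hy 0)
      rw [he1.fderiv_eq, he0.fderiv_eq, curl_mul hUopen hx hu (hhd x hx)] at h0
      exact h0
    have E1 := hE u₁ v₁ H₁ hu₁ hv₁ hH₁ hH₁'
    have E2 := hE u₂ v₂ H₂ hu₂ hv₂ hH₂ hH₂'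
    have hD : grad u₁ x 0 * grad u₂ x 1 - grad u₁ x 1 * grad u₂ x 0 ≠ 0 := by
      intro hD0
      apply hdet x hx
      rw [hH₁ x hx, hH₂ x hx, col2_det]
      simp only [smul_mulVec_apply]
      linear_combination (β x * β x * (γt x 0 0 * γt x 1 1 - γt x 0 1 * γt x 1 0)) * hD0
    have hd0' : fderiv ℝ h x (Pi.single 0 1) = 0 := by
      have hm : fderiv ℝ h x (Pi.single 0 1)
          * (grad u₁ x 0 * grad u₂ x 1 - grad u₁ x 1 * grad u₂ x 0) = 0 := by
        linear_combination grad u₁ x 0 * E2 - grad u₂ x 0 * E1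
      exact (mul_eq_zero.mp hm).resolve_right hD
    have hd1' : fderiv ℝ h x (Pi.single 1 1) = 0 := by
      have hm : fderiv ℝ h x (Pi.single 1 1)
          * (grad u₁ x 0 * grad u₂ x 1 - grad u₁ x 1 * grad u₂ x 0) = 0 := by
        linear_combination grad u₁ x 1 * E2 - grad u₂ x 1 * E1
      exact (mul_eq_zero.mp hm).resolve_right hD
    apply ContinuousLinearMap.ext
    intro w
    have hw : w = w 0 • (Pi.single 0 1 : Fin 2 → ℝ) + w 1 • (Pi.single 1 1 : Fin 2 → ℝ) := by
      funext i
      fin_cases i <;> simp [Pi.single_apply]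
    rw [hw, map_add, (fderiv ℝ h x).map_smul, (fderiv ℝ h x).map_smul, hd0', hd1']
    simp
  have hconst : ∀ x ∈ U, h x = h x₀ := by
    have hball : ∀ z ∈ U, ∃ ε > 0, Metric.ball z ε ⊆ U ∧ ∀ y ∈ Metric.ball z ε, h y = h z := by
      intro z hz
      obtain ⟨ε, hε, hsub⟩ := Metric.isOpen_iff.mp hUopen z hz
      refine ⟨ε, hε, hsub, fun y hy => ?_⟩
      refine (convex_ball z ε).is_const_of_fderivWithin_eq_zero
        (fun w hw => (hhd w (hsub hw)).differentiableWithinAt) (fun w hw => ?_) hy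
        (Metric.mem_ball_self hε)
      rw [fderivWithin_of_isOpen Metric.isOpen_ball hw]
      exact hd0 w (hsub hw)
    have hSopen : IsOpen {y | y ∈ U ∧ h y = h x₀} := by
      rw [Metric.isOpen_iff]
      rintro y ⟨hyU, hyv⟩
      obtain ⟨ε, hε, hsub, hcon⟩ := hball y hyU
      exact ⟨ε, hε, fun z hzb => ⟨hsub hzb, by rw [hcon z hzb]; exact hyv⟩⟩
    have hTopen : IsOpen {y | y ∈ U ∧ h y ≠ h x₀} := by
      rw [Metric.isOpen_iff]
      rintro y ⟨hyU, hyv⟩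
      obtain ⟨ε, hε, hsub, hcon⟩ := hball y hyU
      exact ⟨ε, hε, fun z hzb => ⟨hsub hzb, by rw [hcon z hzb]; exact hyv⟩⟩
    have hdisj : Disjoint {y | y ∈ U ∧ h y = h x₀} {y | y ∈ U ∧ h y ≠ h x₀} :=
      Set.disjoint_left.mpr fun a ha hb => hb.2 ha.2
    have hsub2 : U ⊆ {y | y ∈ U ∧ h y = h x₀} ∪ {y | y ∈ U ∧ h y ≠ h x₀} := by
      intro y hy
      by_cases hc : h y = h x₀
      · exact Or.inl ⟨hy, hc⟩
      · exact Or.inr ⟨hy, hc⟩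
    have hfin := hUconn.isPreconnected.subset_left_of_subset_union hSopen hTopen hdisj hsub2
      ⟨x₀, hx₀, hx₀, rfl⟩
    exact fun x hx => (hfin hx).2
  intro x hx
  have hcx := hconst x hx
  simp only [hh] at hcx
  rw [hβx₀, div_self (hβ'ne x₀ hx₀)] at hcx
  exact (div_eq_one_iff_eq (hβ'ne x hx)).mp hcx

theorem stmt0 (U : Set (Fin 2 → ℝ)) (hUopen : IsOpen U) (hUconn : IsConnected U)
    (β β' : (Fin 2 → ℝ) → ℝ)
    (hβC : ContDiffOn ℝ 1 β U) (hβ'C : ContDiffOn ℝ 1 β' U)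
    (hβpos : ∀ x ∈ U, 0 < β x) (hβ'pos : ∀ x ∈ U, 0 < β' x)
    (γt γt' : (Fin 2 → ℝ) → Matrix (Fin 2) (Fin 2) ℝ)
    (hγtC : ∀ i j, ContDiffOn ℝ 1 (fun x => γt x i j) U)
    (hγt'C : ∀ i j, ContDiffOn ℝ 1 (fun x => γt' x i j) U)
    (hγtpd : ∀ x ∈ U, (γt x).PosDef) (hγt'pd : ∀ x ∈ U, (γt' x).PosDef)
    (hγtdet : ∀ x ∈ U, (γt x).det = 1) (hγt'det : ∀ x ∈ U, (γt' x).det = 1)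
    (u₁ u₂ u₃ u₄ v₁ v₂ v₃ v₄ : (Fin 2 → ℝ) → ℝ)
    (hu₁ : ContDiffOn ℝ 2 u₁ U) (hu₂ : ContDiffOn ℝ 2 u₂ U)
    (hu₃ : ContDiffOn ℝ 2 u₃ U) (hu₄ : ContDiffOn ℝ 2 u₄ U)
    (hv₁ : ContDiffOn ℝ 2 v₁ U) (hv₂ : ContDiffOn ℝ 2 v₂ U)
    (hv₃ : ContDiffOn ℝ 2 v₃ U) (hv₄ : ContDiffOn ℝ 2 v₄ U)
    (H₁ H₂ H₃ H₄ : (Fin 2 → ℝ) → Fin 2 → ℝ)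
    -- the common data `Hᵢ = γ∇uᵢ = γ'∇u'ᵢ` (hypothesis (i)):
    (hH₁ : ∀ x ∈ U, H₁ x = (β x • γt x).mulVec (grad u₁ x))
    (hH₂ : ∀ x ∈ U, H₂ x = (β x • γt x).mulVec (grad u₂ x))
    (hH₃ : ∀ x ∈ U, H₃ x = (β x • γt x).mulVec (grad u₃ x))
    (hH₄ : ∀ x ∈ U, H₄ x = (β x • γt x).mulVec (grad u₄ x))
    (hH₁' : ∀ x ∈ U, H₁ x = (β' x • γt' x).mulVec (grad v₁ x))
    (hH₂' : ∀ x ∈ U, H₂ x = (β' x • γt' x).mulVec (grad v₂ x))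
    (hH₃' : ∀ x ∈ U, H₃ x = (β' x • γt' x).mulVec (grad v₃ x))
    (hH₄' : ∀ x ∈ U, H₄ x = (β' x • γt' x).mulVec (grad v₄ x))
    -- hypothesis (ii): nondegeneracy of `[H₁, H₂]`:
    (hdet : ∀ x ∈ U, (col2 (H₁ x) (H₂ x)).det ≠ 0)
    -- hypothesis (iii): linear independence of the constraint matrices `M₁(x), M₂(x)`:
    (hMindep : ∀ x ∈ U,
      LinearIndependent ℝ ![constraintMat H₁ H₂ H₃ x, constraintMat H₁ H₂ H₄ x])
    -- hypothesis (iv): agreement of the scalar parts at one point: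
    (x₀ : Fin 2 → ℝ) (hx₀ : x₀ ∈ U) (hβx₀ : β x₀ = β' x₀) :
    ∀ x ∈ U, γt x = γt' x ∧ β x = β' x ∧ β x • γt x = β' x • γt' x := by
  have hγsym : ∀ x ∈ U, γt x 1 0 = γt x 0 1 := fun x hx => by
    simpa using (hγtpd x hx).1.apply 0 1
  have hγ'sym : ∀ x ∈ U, γt' x 1 0 = γt' x 0 1 := fun x hx => by
    simpa using (hγt'pd x hx).1.apply 0 1
  have hsingle_ne : (Pi.single 0 1 : Fin 2 → ℝ) ≠ 0 := by
    intro h0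
    have := congrFun h0 0
    simp at this
  have hγpos00 : ∀ x ∈ U, 0 < γt x 0 0 := by
    intro x hx
    have h := (hγtpd x hx).diag_pos (i := 0)
    simpa [dotProduct, Matrix.mulVec, Fin.sum_univ_two] using h
  have hγ'pos00 : ∀ x ∈ U, 0 < γt' x 0 0 := by
    intro x hx
    have h := (hγt'pd x hx).diag_pos (i := 0)
    simpa [dotProduct, Matrix.mulVec, Fin.sum_univ_two] using h
  have hdet2 : ∀ x ∈ U, γt x 0 0 * γt x 1 1 - γt x 0 1 * γt x 0 1 = 1 := by
    intro x hx
    have hd := hγtdet x hx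
    rw [Matrix.det_fin_two, hγsym x hx] at hd
    exact hd
  have hdet2' : ∀ x ∈ U, γt' x 0 0 * γt' x 1 1 - γt' x 0 1 * γt' x 0 1 = 1 := by
    intro x hx
    have hd := hγt'det x hx
    rw [Matrix.det_fin_two, hγ'sym x hx] at hd
    exact hd
  have hγeq : ∀ x ∈ U, γt x = γt' x := by
    intro x hx
    have o1 := ortho hUopen hβC hβpos hγtC hγsym hγtdet hu₁ hu₂ hu₃ hH₁ hH₂ hH₃ hdet hx
    have o2 := ortho hUopen hβC hβpos hγtC hγsym hγtdet hu₁ hu₂ hu₄ hH₁ hH₂ hH₄ hdet hx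
    have o3 := ortho hUopen hβ'C hβ'pos hγt'C hγ'sym hγt'det hv₁ hv₂ hv₃ hH₁' hH₂' hH₃' hdet hx
    have o4 := ortho hUopen hβ'C hβ'pos hγt'C hγ'sym hγt'det hv₁ hv₂ hv₄ hH₁' hH₂' hH₄' hdet hx
    exact pointwise_lin (γt x) (γt' x) (constraintMat H₁ H₂ H₃ x) (constraintMat H₁ H₂ H₄ x)
      (hγsym x hx) (hγ'sym x hx) (symPart_sym _) (symPart_sym _)
      (hγpos00 x hx) (hγ'pos00 x hx) (hdet2 x hx) (hdet2' x hx) (hMindep x hx) o1 o2 o3 o4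
  have hβeq := beta_eq hUopen hUconn hβC hβ'C hβ'pos hγtdet hu₁ hu₂ hv₁ hv₂ hH₁ hH₂
    (fun x hx => by rw [hH₁' x hx, hγeq x hx]) (fun x hx => by rw [hH₂' x hx, hγeq x hx])
    hdet hx₀ hβx₀
  intro x hx
  exact ⟨hγeq x hx, hβeq x hx, by rw [hγeq x hx, hβeq x hx]⟩
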